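/- Let a > 0 and x ∈ C²([-a, a]) (so in particular x' is bounded). Then the following identity holds for all t ∈ ℝ: ∫_{-a}^{a} [-(d/dξ)((1 - ξ²/a²) x'(ξ)) + ξ² x(ξ)] e^{itξ} dξ = [-(d/dt)((1 - t²/a²) (d/dt)) + t²] ∫_{-a}^{a} x(ξ) e^{itξ} dξ; i.e., the prolate spheroid differential expression L commutes with the truncated Fourier transform on such functions (the boundary terms vanish since (1 - ξ²/a²) vanishes at ξ = ±a). -/

import Mathlib

open Set MeasureTheory Metric

private lemma hexp1 (c : ℂ) (u : ℝ) :
    HasDerivAt (fun r : ℝ => Complex.exp (c * r)) (c * Complex.exp (c * u)) u := by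
  have h1 : HasDerivAt (fun z : ℂ => c * z) c (u : ℂ) := by
    simpa using (hasDerivAt_id (u : ℂ)).const_mul c
  simpa [mul_comm] using h1.cexp.comp_ofReal

private lemma hexp2 (d : ℂ) (u : ℝ) :
    HasDerivAt (fun r : ℝ => Complex.exp (Complex.I * r * d))
      (Complex.I * d * Complex.exp (Complex.I * u * d)) u := by
  have h1 : HasDerivAt (fun z : ℂ => Complex.I * z * d) (Complex.I * d) (u : ℂ) := by
    simpa using ((hasDerivAt_id (u : ℂ)).const_mul Complex.I).mul_const d
  simpa [mul_comm] using h1.cexp.comp_ofReal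

private lemma normexp (u v : ℝ) : ‖Complex.exp (Complex.I * u * v)‖ = 1 := by
  rw [Complex.norm_exp]
  simp [Complex.mul_re]

private lemma paramDeriv (a : ℝ) (ha : 0 < a) (c : ℝ → ℂ)
    (hc : ContinuousOn c (Icc (-a) a)) (s : ℝ) :
    HasDerivAt (fun s : ℝ => ∫ ξ in (-a)..a, c ξ * Complex.exp (Complex.I * s * ξ))
      (∫ ξ in (-a)..a, c ξ * (Complex.I * ξ) * Complex.exp (Complex.I * s * ξ)) s := by
  have hab : -a ≤ a := by linarith
  have hsub : uIoc (-a) a ⊆ Icc (-a) a := by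
    rw [uIoc_of_le hab]; exact Ioc_subset_Icc_self
  have hmeas : ∀ u : ℝ, AEStronglyMeasurable
      (fun ξ => c ξ * Complex.exp (Complex.I * u * ξ)) (volume.restrict (uIoc (-a) a)) := by
    intro u
    refine ContinuousOn.aestronglyMeasurable ?_ measurableSet_uIoc
    exact (hc.mono hsub).mul (Continuous.continuousOn (by fun_prop))
  have key := intervalIntegral.hasDerivAt_integral_of_dominated_loc_of_deriv_le
    (𝕜 := ℝ) (μ := volume)
    (F := fun u ξ => c ξ * Complex.exp (Complex.I * u * ξ))
    (F' := fun u ξ => c ξ * (Complex.I * ξ) * Complex.exp (Complex.I * u * ξ))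
    (x₀ := s) (bound := fun ξ => ‖c ξ‖ * a) (s := ball s 1) (ball_mem_nhds s one_pos)
    (Filter.Eventually.of_forall fun u => hmeas u)
    (by
      apply ContinuousOn.intervalIntegrable
      rw [uIcc_of_le hab]
      exact hc.mul (Continuous.continuousOn (by fun_prop)))
    (by
      refine ContinuousOn.aestronglyMeasurable ?_ measurableSet_uIoc
      exact ((hc.mono hsub).mul (Continuous.continuousOn (by fun_prop))).mul
        (Continuous.continuousOn (by fun_prop)))
    (Filter.Eventually.of_forall (fun ξ hξ u _ => by
      have hξ' := hsub hξ
      have h1 : ‖Complex.exp (Complex.I * u * ξ)‖ = 1 := normexp u ξ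
      rw [norm_mul, norm_mul, h1, mul_one]
      have h2 : ‖Complex.I * (ξ : ℂ)‖ = |ξ| := by
        rw [norm_mul, Complex.norm_I, one_mul, Complex.norm_real, Real.norm_eq_abs]
      rw [h2]
      have : |ξ| ≤ a := abs_le.2 ⟨hξ'.1, hξ'.2⟩
      exact mul_le_mul_of_nonneg_left this (norm_nonneg _)))
    (by
      apply ContinuousOn.intervalIntegrable
      rw [uIcc_of_le hab]
      exact hc.norm.mul continuousOn_const)
    (Filter.Eventually.of_forall (fun ξ hξ u _ => by
      simpa [mul_assoc] using (hexp2 (ξ : ℂ) u).const_mul (c ξ)))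
  exact key.2

/-- The prolate spheroid differential expression commutes with the truncated
Fourier transform on functions of class `C²([-a,a])`. -/
theorem stmt18 (a : ℝ) (ha : 0 < a) (x x' q : ℝ → ℂ)
    (hx : ∀ t ∈ Icc (-a) a, HasDerivWithinAt x (x' t) (Icc (-a) a) t)
    (hx' : ContinuousOn x' (Icc (-a) a))
    (hq : ∀ t ∈ Icc (-a) a,
      HasDerivWithinAt (fun s : ℝ => ((1 : ℂ) - (s : ℂ)^2 / (a : ℂ)^2) * x' s)
        (q t) (Icc (-a) a) t)
    (hqc : ContinuousOn q (Icc (-a) a))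
    (F : ℝ → ℂ)
    (hF : ∀ t : ℝ, F t = ∫ ξ in (-a)..a, x ξ * Complex.exp (Complex.I * t * ξ)) :
    ∀ t : ℝ,
      (∫ ξ in (-a)..a, (-(q ξ) + (ξ : ℂ)^2 * x ξ) * Complex.exp (Complex.I * t * ξ)) =
        -(deriv (fun s : ℝ => ((1 : ℂ) - (s : ℂ)^2 / (a : ℂ)^2) * deriv F s) t) +
          (t : ℂ)^2 * F t := by
  intro t
  have hab : -a ≤ a := by linarith
  have haC : (a : ℂ) ≠ 0 := Complex.ofReal_ne_zero.2 ha.ne'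
  have hxc : ContinuousOn x (Icc (-a) a) := fun u hu => (hx u hu).continuousWithinAt
  have hec : ∀ s : ℝ, Continuous fun ξ : ℝ => Complex.exp (Complex.I * s * ξ) := by
    intro s; fun_prop
  have hpolyC : Continuous fun r : ℝ => (1 : ℂ) - (r : ℂ)^2 / (a : ℂ)^2 := by fun_prop
  -- derivative of the polynomial coefficient
  have hpoly : ∀ ξ : ℝ, HasDerivAt (fun r : ℝ => (1 : ℂ) - (r : ℂ)^2 / (a : ℂ)^2)
      (-(2 * (ξ : ℂ)) / (a : ℂ)^2) ξ := by
    intro ξ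
    have h1 : HasDerivAt (fun z : ℂ => (1 : ℂ) - z^2 / (a : ℂ)^2)
        (-(2 * (ξ : ℂ)) / (a : ℂ)^2) (ξ : ℂ) := by
      have h2 := ((hasDerivAt_pow 2 (ξ : ℂ)).div_const ((a : ℂ)^2)).const_sub 1
      convert h2 using 1
      all_goals first | rfl | ring
    exact h1.comp_ofReal
  -- integrability of the atoms
  have hint0 : IntervalIntegrable (fun ξ : ℝ => x ξ * Complex.exp (Complex.I * t * ξ))
      volume (-a) a := by
    apply ContinuousOn.intervalIntegrable; rw [uIcc_of_le hab]
    exact hxc.mul (hec t).continuousOn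
  have hint1 : IntervalIntegrable (fun ξ : ℝ => (ξ : ℂ) * x ξ * Complex.exp (Complex.I * t * ξ))
      volume (-a) a := by
    apply ContinuousOn.intervalIntegrable; rw [uIcc_of_le hab]
    exact ((Continuous.continuousOn (by fun_prop)).mul hxc).mul (hec t).continuousOn
  have hint2 : IntervalIntegrable (fun ξ : ℝ => (ξ : ℂ)^2 * x ξ * Complex.exp (Complex.I * t * ξ))
      volume (-a) a := by
    apply ContinuousOn.intervalIntegrable; rw [uIcc_of_le hab]
    exact ((Continuous.continuousOn (by fun_prop)).mul hxc).mul (hec t).continuousOn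
  have hintC : IntervalIntegrable
      (fun ξ : ℝ => ((1 : ℂ) - (ξ : ℂ)^2 / (a : ℂ)^2) * x' ξ * Complex.exp (Complex.I * t * ξ))
      volume (-a) a := by
    apply ContinuousOn.intervalIntegrable; rw [uIcc_of_le hab]
    exact (hpolyC.continuousOn.mul hx').mul (hec t).continuousOn
  have hintq : IntervalIntegrable (fun ξ : ℝ => q ξ * Complex.exp (Complex.I * t * ξ))
      volume (-a) a := by
    apply ContinuousOn.intervalIntegrable; rw [uIcc_of_le hab]
    exact hqc.mul (hec t).continuousOn
  -- first integration by parts (FTC on ((1-ξ²/a²)x')·e)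
  have ftc1 : (∫ ξ in (-a)..a,
      (q ξ * Complex.exp (Complex.I * t * ξ) +
        ((1 : ℂ) - (ξ : ℂ)^2 / (a : ℂ)^2) * x' ξ *
          (Complex.I * t * Complex.exp (Complex.I * t * ξ)))) = 0 := by
    have hderiv : ∀ ξ ∈ Icc (-a) a, HasDerivWithinAt
        (fun ξ : ℝ => ((1 : ℂ) - (ξ : ℂ)^2 / (a : ℂ)^2) * x' ξ *
          Complex.exp (Complex.I * t * ξ))
        (q ξ * Complex.exp (Complex.I * t * ξ) +
          ((1 : ℂ) - (ξ : ℂ)^2 / (a : ℂ)^2) * x' ξ *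
            (Complex.I * t * Complex.exp (Complex.I * t * ξ))) (Icc (-a) a) ξ := by
      intro ξ hξ
      exact (hq ξ hξ).mul (hexp1 (Complex.I * t) ξ).hasDerivWithinAt
    have := intervalIntegral.integral_eq_sub_of_hasDeriv_right_of_le hab
      (fun ξ hξ => (hderiv ξ hξ).continuousWithinAt)
      (fun ξ hξ => ((hderiv ξ (Ioo_subset_Icc_self hξ)).hasDerivAt
        (Icc_mem_nhds hξ.1 hξ.2)).hasDerivWithinAt)
      (hintq.add (by
        apply ContinuousOn.intervalIntegrable; rw [uIcc_of_le hab]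
        exact (hpolyC.continuousOn.mul hx').mul (Continuous.continuousOn (by fun_prop))))
    rw [this]
    have h1 : (1 : ℂ) - (a : ℂ)^2 / (a : ℂ)^2 = 0 := by field_simp; simp
    have h2 : (1 : ℂ) - ((-a : ℝ) : ℂ)^2 / (a : ℂ)^2 = 0 := by push_cast; field_simp; simp
    rw [h1, h2]; ring
  -- second integration by parts (FTC on ((1-ξ²/a²)x)·e)
  have ftc2 : (∫ ξ in (-a)..a,
      ((-(2 * (ξ : ℂ)) / (a : ℂ)^2 * x ξ + ((1 : ℂ) - (ξ : ℂ)^2 / (a : ℂ)^2) * x' ξ) *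
          Complex.exp (Complex.I * t * ξ) +
        ((1 : ℂ) - (ξ : ℂ)^2 / (a : ℂ)^2) * x ξ *
          (Complex.I * t * Complex.exp (Complex.I * t * ξ)))) = 0 := by
    have hderiv : ∀ ξ ∈ Icc (-a) a, HasDerivWithinAt
        (fun ξ : ℝ => ((1 : ℂ) - (ξ : ℂ)^2 / (a : ℂ)^2) * x ξ *
          Complex.exp (Complex.I * t * ξ))
        ((-(2 * (ξ : ℂ)) / (a : ℂ)^2 * x ξ + ((1 : ℂ) - (ξ : ℂ)^2 / (a : ℂ)^2) * x' ξ) *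
            Complex.exp (Complex.I * t * ξ) +
          ((1 : ℂ) - (ξ : ℂ)^2 / (a : ℂ)^2) * x ξ *
            (Complex.I * t * Complex.exp (Complex.I * t * ξ))) (Icc (-a) a) ξ := by
      intro ξ hξ
      exact (((hpoly ξ).hasDerivWithinAt.mul (hx ξ hξ))).mul
        (hexp1 (Complex.I * t) ξ).hasDerivWithinAt
    have := intervalIntegral.integral_eq_sub_of_hasDeriv_right_of_le hab
      (fun ξ hξ => (hderiv ξ hξ).continuousWithinAt)
      (fun ξ hξ => ((hderiv ξ (Ioo_subset_Icc_self hξ)).hasDerivAt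
        (Icc_mem_nhds hξ.1 hξ.2)).hasDerivWithinAt)
      (by
        apply ContinuousOn.intervalIntegrable; rw [uIcc_of_le hab]
        apply ContinuousOn.add
        · exact (((Continuous.continuousOn (by fun_prop)).mul hxc).add
            (hpolyC.continuousOn.mul hx')).mul (hec t).continuousOn
        · exact (hpolyC.continuousOn.mul hxc).mul (Continuous.continuousOn (by fun_prop)))
    rw [this]
    have h1 : (1 : ℂ) - (a : ℂ)^2 / (a : ℂ)^2 = 0 := by field_simp; simp
    have h2 : (1 : ℂ) - ((-a : ℝ) : ℂ)^2 / (a : ℂ)^2 = 0 := by push_cast; field_simp; simp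
    rw [h1, h2]; ring
  -- atoms
  set A0 := ∫ ξ in (-a)..a, x ξ * Complex.exp (Complex.I * t * ξ) with hA0
  set A1 := ∫ ξ in (-a)..a, (ξ : ℂ) * x ξ * Complex.exp (Complex.I * t * ξ) with hA1
  set A2 := ∫ ξ in (-a)..a, (ξ : ℂ)^2 * x ξ * Complex.exp (Complex.I * t * ξ) with hA2
  set C := ∫ ξ in (-a)..a,
      ((1 : ℂ) - (ξ : ℂ)^2 / (a : ℂ)^2) * x' ξ * Complex.exp (Complex.I * t * ξ) with hC
  set B := ∫ ξ in (-a)..a, q ξ * Complex.exp (Complex.I * t * ξ) with hB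
  -- split ftc1: B + (I t) C = 0
  have e1 : B + (Complex.I * t) * C = 0 := by
    rw [hB, hC, ← intervalIntegral.integral_const_mul,
      ← intervalIntegral.integral_add hintq (hintC.const_mul _), ← ftc1]
    apply intervalIntegral.integral_congr
    intro ξ _
    ring
  -- split ftc2: (-(2)/a²) A1 + C + (I t) A0 - (I t / a²) A2 = 0
  have e2 : (-(2 : ℂ) / (a : ℂ)^2) * A1 + C + (Complex.I * t) * A0
      - (Complex.I * t / (a : ℂ)^2) * A2 = 0 := by
    rw [hA1, hA2, hA0, hC, ← intervalIntegral.integral_const_mul,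
      ← intervalIntegral.integral_const_mul, ← intervalIntegral.integral_const_mul,
      ← intervalIntegral.integral_add (hint1.const_mul _) hintC,
      ← intervalIntegral.integral_add ((hint1.const_mul _).add hintC) (hint0.const_mul _),
      ← intervalIntegral.integral_sub (((hint1.const_mul _).add hintC).add (hint0.const_mul _))
        (hint2.const_mul _), ← ftc2]
    apply intervalIntegral.integral_congr
    intro ξ _
    ring
  -- derivative of F
  have hFeq : F = fun s : ℝ => ∫ ξ in (-a)..a, x ξ * Complex.exp (Complex.I * s * ξ) :=
    funext hF
  have hD1 : ∀ s : ℝ, HasDerivAt F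
      (∫ ξ in (-a)..a, x ξ * (Complex.I * ξ) * Complex.exp (Complex.I * s * ξ)) s := by
    intro s
    rw [hFeq]
    exact paramDeriv a ha x hxc s
  have hderivF : ∀ s : ℝ, deriv F s
      = ∫ ξ in (-a)..a, x ξ * (Complex.I * ξ) * Complex.exp (Complex.I * s * ξ) :=
    fun s => (hD1 s).deriv
  have hD2 : HasDerivAt (fun s : ℝ => deriv F s)
      (∫ ξ in (-a)..a, (x ξ * (Complex.I * ξ)) * (Complex.I * ξ)
        * Complex.exp (Complex.I * t * ξ)) t := by
    have heq : (fun s : ℝ => deriv F s)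
        = fun s : ℝ => ∫ ξ in (-a)..a,
            (x ξ * (Complex.I * ξ)) * Complex.exp (Complex.I * s * ξ) :=
      funext fun s => hderivF s
    rw [heq]
    exact paramDeriv a ha (fun ξ => x ξ * (Complex.I * ξ))
      (hxc.mul (Continuous.continuousOn (by fun_prop))) t
  have hG : HasDerivAt (fun s : ℝ => ((1 : ℂ) - (s : ℂ)^2 / (a : ℂ)^2) * deriv F s)
      ((-(2 * (t : ℂ)) / (a : ℂ)^2) * deriv F t +
        ((1 : ℂ) - (t : ℂ)^2 / (a : ℂ)^2) *
          (∫ ξ in (-a)..a, (x ξ * (Complex.I * ξ)) * (Complex.I * ξ)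
            * Complex.exp (Complex.I * t * ξ))) t :=
    (hpoly t).mul hD2
  -- expressing the parametric integrals through atoms
  have hI : (Complex.I)^2 = -1 := Complex.I_sq
  have d1 : (∫ ξ in (-a)..a, x ξ * (Complex.I * ξ) * Complex.exp (Complex.I * t * ξ))
      = Complex.I * A1 := by
    rw [hA1, ← intervalIntegral.integral_const_mul]
    apply intervalIntegral.integral_congr
    intro ξ _
    ring
  have d2 : (∫ ξ in (-a)..a, (x ξ * (Complex.I * ξ)) * (Complex.I * ξ)
      * Complex.exp (Complex.I * t * ξ)) = -A2 := by
    rw [hA2, ← intervalIntegral.integral_neg]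
    apply intervalIntegral.integral_congr
    intro ξ _
    linear_combination ((ξ : ℂ)^2 * x ξ * Complex.exp (Complex.I * t * ξ)) * hI
  -- left-hand side through atoms
  have lhs : (∫ ξ in (-a)..a, (-(q ξ) + (ξ : ℂ)^2 * x ξ) * Complex.exp (Complex.I * t * ξ))
      = -B + A2 := by
    have h2 : (∫ ξ in (-a)..a, (-(q ξ * Complex.exp (Complex.I * t * ξ))
        + (ξ : ℂ)^2 * x ξ * Complex.exp (Complex.I * t * ξ))) = -B + A2 := by
      have hqn : IntervalIntegrable (fun ξ : ℝ => -(q ξ * Complex.exp (Complex.I * t * ξ)))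
          volume (-a) a := hintq.neg
      rw [intervalIntegral.integral_add hqn hint2, intervalIntegral.integral_neg, hB, hA2]
    rw [← h2]
    exact intervalIntegral.integral_congr fun ξ _ => by ring
  rw [lhs, hG.deriv, hF t, ← hA0, hderivF t, d1, d2]
  have ha2 : (a : ℂ)^2 ≠ 0 := pow_ne_zero _ haC
  -- B = -(I t) C ; C from e2
  have hBeq : B = -(Complex.I * t) * C := by linear_combination e1
  rw [hBeq]
  have hCeq : C = (2 : ℂ) / (a : ℂ)^2 * A1 - Complex.I * t * A0
      + Complex.I * t / (a : ℂ)^2 * A2 := by linear_combination e2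
  rw [hCeq]
  field_simp
  linear_combination ((t : ℂ)^2 * A2 - (t : ℂ)^2 * (a : ℂ)^2 * A0) * hI
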